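/- Let p ∈ (1, 2), λ > 0, and E : ℝ^M × ℝ^M → ℝ≥0 convex and differentiable in its second argument with the y-Lipschitz gradient constant K. Suppose f_{y₁}, f_{y₂} ∈ ℝ^N minimize f ↦ E(y_i, ν f) + λ‖f‖_p^p and satisfy ‖f_{y_i}‖_p ≤ r for i = 1, 2. Then ‖f_{y₁} - f_{y₂}‖_p ≤ ((2r)^{2-p} K/(λ p (p-1))) · ‖y₁ - y₂‖₂. -/

import Mathlib

open Real Finset Filter

lemma my_rpow_add_le {a b q : ℝ} (ha : 0 ≤ a) (hb : 0 ≤ b) (h0 : 0 ≤ q) (h1 : q ≤ 1) :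
    (a + b) ^ q ≤ a ^ q + b ^ q := by
  lift a to NNReal using ha
  lift b to NNReal using hb
  exact_mod_cast NNReal.rpow_add_le_add_rpow a b h0 h1

lemma abs_rpow_hasDerivAt {p : ℝ} (hp : 1 < p) (x : ℝ) :
    HasDerivAt (fun t : ℝ => |t| ^ p) (p * (x * |x| ^ (p - 2))) x := by
  rcases lt_trichotomy x 0 with hx | rfl | hx
  · have hpos : (0:ℝ) < -x := by linarith
    have h1 : HasDerivAt (fun t : ℝ => (-t) ^ p) (p * (-x) ^ (p - 1) * -1) x :=
      (Real.hasDerivAt_rpow_const (p := p) (x := -x) (Or.inl hpos.ne')).comp x (hasDerivAt_neg x)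
    have h2 : (fun t : ℝ => |t| ^ p) =ᶠ[nhds x] fun t : ℝ => (-t) ^ p := by
      filter_upwards [eventually_lt_nhds hx] with t ht
      rw [abs_of_neg ht]
    have h3 : p * (-x) ^ (p - 1) * -1 = p * (x * |x| ^ (p - 2)) := by
      rw [abs_of_neg hx, show p - 1 = (p-2) + 1 by ring, Real.rpow_add hpos, Real.rpow_one]
      ring
    exact h3 ▸ h1.congr_of_eventuallyEq h2
  · simp only [zero_mul, mul_zero]
    rw [hasDerivAt_iff_tendsto_slope]
    have hc : ContinuousAt (fun t : ℝ => |t| ^ (p-1)) 0 :=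
      (continuous_abs.continuousAt).rpow_const (Or.inr (by linarith))
    have hb : Tendsto (fun t : ℝ => |t| ^ (p-1)) (nhdsWithin 0 {(0:ℝ)}ᶜ) (nhds 0) := by
      have h0 : |(0:ℝ)| ^ (p-1) = 0 := by
        rw [abs_zero, Real.zero_rpow (by linarith : p - 1 ≠ 0)]
      exact (h0 ▸ hc.tendsto).mono_left nhdsWithin_le_nhds
    apply squeeze_zero_norm' ?_ hb
    filter_upwards [self_mem_nhdsWithin] with t (ht : t ≠ 0)
    have habs : (0:ℝ) < |t| := abs_pos.2 ht
    have heq : |t| ^ p / |t| = |t| ^ (p-1) := by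
      rw [Real.rpow_sub habs, Real.rpow_one]
    rw [slope_def_field, abs_zero, Real.zero_rpow (by positivity : p ≠ 0), sub_zero, sub_zero,
      Real.norm_eq_abs, abs_div, abs_of_nonneg (Real.rpow_nonneg (abs_nonneg t) p)]
    exact le_of_eq heq
  · have h1 : HasDerivAt (fun t : ℝ => t ^ p) (p * x ^ (p - 1)) x :=
      Real.hasDerivAt_rpow_const (p := p) (x := x) (Or.inl hx.ne')
    have h2 : (fun t : ℝ => |t| ^ p) =ᶠ[nhds x] fun t : ℝ => t ^ p := by
      filter_upwards [eventually_gt_nhds hx] with t ht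
      rw [abs_of_pos ht]
    have h3 : p * x ^ (p - 1) = p * (x * |x| ^ (p - 2)) := by
      rw [abs_of_pos hx, show p - 1 = (p-2) + 1 by ring, Real.rpow_add hx, Real.rpow_one]
      ring
    exact h3 ▸ h1.congr_of_eventuallyEq h2

lemma g_eq_nonneg {p : ℝ} (hp : 1 < p) {x : ℝ} (hx : 0 ≤ x) :
    x * |x| ^ (p - 2) = x ^ (p - 1) := by
  rcases hx.eq_or_lt with rfl | h
  · rw [Real.zero_rpow (by linarith : p - 1 ≠ 0), zero_mul]
  · rw [abs_of_pos h, show p - 1 = (p - 2) + 1 by ring, Real.rpow_add h, Real.rpow_one]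
    ring

lemma g_eq_nonpos {p : ℝ} (hp : 1 < p) {x : ℝ} (hx : x ≤ 0) :
    x * |x| ^ (p - 2) = -((-x) ^ (p - 1)) := by
  have h := g_eq_nonneg hp (neg_nonneg.2 hx)
  rw [abs_neg] at h
  linarith

lemma core_ineq {p : ℝ} (hp1 : 1 < p) (hp2 : p < 2) {a b : ℝ} (hb : 0 ≤ b) (hab : b < a) :
    (p - 1) * ((a - b) ^ 2 * (a + b) ^ (p - 2)) ≤ (a ^ (p - 1) - b ^ (p - 1)) * (a - b) := by
  have ha : 0 < a := lt_of_le_of_lt hb hab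
  have hcont : ContinuousOn (fun x : ℝ => x ^ (p - 1)) (Set.Icc b a) := fun x _ =>
    (Real.continuousAt_rpow_const x (p - 1) (Or.inr (by linarith))).continuousWithinAt
  have hderiv : ∀ x ∈ Set.Ioo b a, HasDerivAt (fun x : ℝ => x ^ (p - 1))
      ((p - 1) * x ^ (p - 1 - 1)) x := fun x hx =>
    Real.hasDerivAt_rpow_const (Or.inl (by have := hx.1; nlinarith))
  obtain ⟨ξ, hξ, hslope⟩ := exists_hasDerivAt_eq_slope _ _ hab hcont hderiv
  have hξ0 : 0 < ξ := lt_of_le_of_lt hb hξ.1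
  have hmono : (a + b) ^ (p - 2) ≤ ξ ^ (p - 2) :=
    Real.rpow_le_rpow_of_nonpos hξ0 (by nlinarith [hξ.2]) (by linarith)
  have h1 : 0 < a - b := by linarith
  have heq : a ^ (p - 1) - b ^ (p - 1) = (p - 1) * ξ ^ (p - 2) * (a - b) := by
    rw [show p - 2 = p - 1 - 1 by ring]
    rw [eq_div_iff h1.ne'] at hslope
    linarith
  rw [heq]
  nlinarith [mul_le_mul_of_nonneg_left hmono
    (mul_nonneg (by linarith : (0:ℝ) ≤ p - 1) (sq_nonneg (a - b)))]

lemma mono_pointwise {p : ℝ} (hp1 : 1 < p) (hp2 : p < 2) (a b : ℝ) :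
    (p - 1) * ((a - b) ^ 2 * (|a| + |b|) ^ (p - 2)) ≤
      (a * |a| ^ (p - 2) - b * |b| ^ (p - 2)) * (a - b) := by
  suffices H : ∀ a b : ℝ, b ≤ a →
      (p - 1) * ((a - b) ^ 2 * (|a| + |b|) ^ (p - 2)) ≤
        (a * |a| ^ (p - 2) - b * |b| ^ (p - 2)) * (a - b) by
    rcases le_total b a with h | h
    · exact H a b h
    · have := H b a h
      rw [add_comm |b| |a|, show (b - a) ^ 2 = (a - b) ^ 2 by ring] at this
      have e : (b * |b| ^ (p - 2) - a * |a| ^ (p - 2)) * (b - a) =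
          (a * |a| ^ (p - 2) - b * |b| ^ (p - 2)) * (a - b) := by ring
      linarith [e ▸ this]
  intro a b hba
  rcases hba.eq_or_lt with rfl | hlt
  · simp
  rcases le_or_gt 0 b with hb | hb
  · have ha : 0 < a := lt_of_le_of_lt hb hlt
    rw [g_eq_nonneg hp1 ha.le, g_eq_nonneg hp1 hb, abs_of_pos ha, abs_of_nonneg hb]
    exact core_ineq hp1 hp2 hb hlt
  rcases le_or_gt a 0 with ha | ha
  · have h := core_ineq hp1 hp2 (a := -b) (b := -a) (neg_nonneg.2 ha) (by linarith)
    rw [g_eq_nonpos hp1 ha, g_eq_nonpos hp1 hb.le, abs_of_nonpos ha, abs_of_neg hb]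
    rw [add_comm (-b) (-a), show (-b - -a) ^ 2 = (a - b) ^ 2 by ring] at h
    have e : ((-b) ^ (p - 1) - (-a) ^ (p - 1)) * (-b - -a) =
        (-((-a) ^ (p - 1)) - -((-b) ^ (p - 1))) * (a - b) := by ring
    linarith [e ▸ h]
  · rw [g_eq_nonneg hp1 ha.le, g_eq_nonpos hp1 hb.le, abs_of_pos ha, abs_of_neg hb]
    have hc : (0:ℝ) < a + -b := by linarith
    have hsub : (a + -b) ^ (p - 1) ≤ a ^ (p - 1) + (-b) ^ (p - 1) :=
      my_rpow_add_le ha.le (by linarith) (by linarith) (by linarith)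
    have hkey : (p - 1) * (a + -b) ^ (p - 1) ≤ a ^ (p - 1) + (-b) ^ (p - 1) := by
      nlinarith [Real.rpow_nonneg hc.le (p - 1)]
    have hE : (a + -b) ^ (p - 2) * (a + -b) = (a + -b) ^ (p - 1) := by
      rw [show p - 1 = (p - 2) + 1 by ring, Real.rpow_add hc, Real.rpow_one]
    have e2 : (p - 1) * ((a - b) ^ 2 * (a + -b) ^ (p - 2)) =
        (p - 1) * (a + -b) ^ (p - 1) * (a + -b) := by
      rw [← hE]; ring
    have e3 : (a ^ (p - 1) - -(-b) ^ (p - 1)) * (a - b) =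
        (a ^ (p - 1) + (-b) ^ (p - 1)) * (a + -b) := by ring
    rw [e2, e3]
    exact mul_le_mul_of_nonneg_right hkey hc.le

lemma holder_point {p : ℝ} (hp1 : 1 < p) (hp2 : p < 2) {d s : ℝ} (hs : 0 ≤ s) (hds : |d| ≤ s) :
    |d| ^ p = (d ^ 2 * s ^ (p - 2)) ^ (p / 2) * (s ^ p) ^ ((2 - p) / 2) := by
  rcases hs.eq_or_lt with rfl | hs
  · have hd : d = 0 := abs_eq_zero.mp (le_antisymm hds (abs_nonneg d))
    simp [hd, Real.zero_rpow (show p ≠ 0 by linarith),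
      Real.zero_rpow (show p / 2 ≠ 0 from div_ne_zero (by linarith) two_ne_zero)]
  · have hd2 : (d ^ 2 * s ^ (p - 2)) ^ (p / 2) = (|d| ^ p) * (s ^ (p - 2)) ^ (p / 2) := by
      rw [Real.mul_rpow (sq_nonneg d) (Real.rpow_nonneg hs.le _), ← sq_abs,
        ← Real.rpow_natCast |d| 2, ← Real.rpow_mul (abs_nonneg d)]
      rw [show ((2:ℕ):ℝ) * (p / 2) = p by push_cast; ring]
    rw [hd2, mul_assoc, ← Real.rpow_mul hs.le, ← Real.rpow_mul hs.le,
      ← Real.rpow_add hs, show (p - 2) * (p / 2) + p * ((2 - p) / 2) = 0 by ring,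
      Real.rpow_zero, mul_one]

lemma hasFDerivAt_sum_abs_rpow {p : ℝ} (hp : 1 < p) {N : ℕ} (f : Fin N → ℝ) :
    HasFDerivAt (fun f : Fin N → ℝ => ∑ i, |f i| ^ p)
      (∑ i, (p * (f i * |f i| ^ (p - 2))) •
        (ContinuousLinearMap.proj i : (Fin N → ℝ) →L[ℝ] ℝ)) f := by
  apply HasFDerivAt.fun_sum (A := fun i (f : Fin N → ℝ) => |f i| ^ p)
  intro i _
  exact (abs_rpow_hasDerivAt hp (f i)).comp_hasFDerivAt f (hasFDerivAt_apply (𝕜 := ℝ) (F' := fun _ : Fin N => ℝ) i f)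

set_option maxHeartbeats 2000000 in
/-- Local Lipschitz continuity of `ℓ_p`-regularized linear inverse problems for
`p ∈ (1,2)`: under the same hypotheses as the `p ≥ 2` case, plus the a-priori bound
`‖f_{y_i}‖_p ≤ r`, we get `‖f_{y₁} - f_{y₂}‖_p ≤ ((2r)^{2-p}K/(λp(p-1))) ‖y₁ - y₂‖₂`. -/
theorem lp_local_lipschitz_small_p {M N : ℕ} (p : ℝ) (hp1 : 1 < p) (hp2 : p < 2)
    (lam : ℝ) (hlam : 0 < lam)
    (E : (Fin M → ℝ) → (Fin M → ℝ) → ℝ) (hE0 : ∀ y z, 0 ≤ E y z)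
    (ν : (Fin N → ℝ) →ₗ[ℝ] (Fin M → ℝ))
    (grad : (Fin M → ℝ) → (Fin N → ℝ) → (Fin N → ℝ))
    (hgrad : ∀ y f, HasFDerivAt (fun f' => E y (ν f'))
      (∑ i, grad y f i • (ContinuousLinearMap.proj i : (Fin N → ℝ) →L[ℝ] ℝ)) f)
    (hconv : ∀ y, ConvexOn ℝ Set.univ (E y))
    (K : ℝ)
    (hK : ∀ y₁ y₂ : Fin M → ℝ, ∀ f : Fin N → ℝ,
      (∑ i, |grad y₁ f i - grad y₂ f i| ^ (p / (p - 1))) ^ ((p - 1) / p) ≤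
        K * Real.sqrt (∑ j, (y₁ j - y₂ j) ^ 2))
    (y₁ y₂ : Fin M → ℝ) (f₁ f₂ : Fin N → ℝ)
    (hf₁ : ∀ f, E y₁ (ν f₁) + lam * ∑ i, |f₁ i| ^ p ≤ E y₁ (ν f) + lam * ∑ i, |f i| ^ p)
    (hf₂ : ∀ f, E y₂ (ν f₂) + lam * ∑ i, |f₂ i| ^ p ≤ E y₂ (ν f) + lam * ∑ i, |f i| ^ p)
    (r : ℝ)
    (hr₁ : (∑ i, |f₁ i| ^ p) ^ (1 / p) ≤ r)
    (hr₂ : (∑ i, |f₂ i| ^ p) ^ (1 / p) ≤ r) :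
    (∑ i, |f₁ i - f₂ i| ^ p) ^ (1 / p) ≤
      (2 * r) ^ (2 - p) * K / (lam * p * (p - 1)) *
        Real.sqrt (∑ j, (y₁ j - y₂ j) ^ 2) := by
  have hp0 : (0:ℝ) < p := by linarith
  have hps : (0:ℝ) < p - 1 := by linarith
  have hlp : (0:ℝ) < lam * p := by positivity
  set Y : ℝ := Real.sqrt (∑ j, (y₁ j - y₂ j) ^ 2) with hYdef
  have hY0 : 0 ≤ Y := Real.sqrt_nonneg _
  have hKY : 0 ≤ K * Y := le_trans (Real.rpow_nonneg
    (Finset.sum_nonneg fun i _ => Real.rpow_nonneg (abs_nonneg _) _) _) (hK y₁ y₂ f₁)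
  have hr0 : 0 ≤ r := le_trans (Real.rpow_nonneg
    (Finset.sum_nonneg fun i _ => Real.rpow_nonneg (abs_nonneg _) _) _) hr₁
  -- optimality conditions
  have hopt : ∀ (y : Fin M → ℝ) (f₀ : Fin N → ℝ),
      (∀ f, E y (ν f₀) + lam * ∑ i, |f₀ i| ^ p ≤ E y (ν f) + lam * ∑ i, |f i| ^ p) →
      ∀ j, grad y f₀ j + lam * (p * (f₀ j * |f₀ j| ^ (p - 2))) = 0 := by
    intro y f₀ hmin j
    have hreg := hasFDerivAt_sum_abs_rpow hp1 f₀
    have htot : HasFDerivAt (fun f => E y (ν f) + lam * ∑ i, |f i| ^ p)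
        ((∑ i, grad y f₀ i • (ContinuousLinearMap.proj i : (Fin N → ℝ) →L[ℝ] ℝ)) +
          lam • (∑ i, (p * (f₀ i * |f₀ i| ^ (p - 2))) •
            (ContinuousLinearMap.proj i : (Fin N → ℝ) →L[ℝ] ℝ))) f₀ :=
      (hgrad y f₀).add (hreg.const_mul lam)
    have hlocal : IsLocalMin (fun f => E y (ν f) + lam * ∑ i, |f i| ^ p) f₀ :=
      Filter.Eventually.of_forall hmin
    have hzero := hlocal.hasFDerivAt_eq_zero htot
    have happ := congrArg (fun L : (Fin N → ℝ) →L[ℝ] ℝ => L (Pi.single j 1)) hzero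
    simpa [ContinuousLinearMap.sum_apply, Pi.single_apply] using happ
  have h1 := hopt y₁ f₁ hf₁
  have h2 := hopt y₂ f₂ hf₂
  -- monotonicity of the gradient of f ↦ E y₁ (ν f)
  have hmono : 0 ≤ ∑ i, (grad y₁ f₁ i - grad y₁ f₂ i) * (f₁ i - f₂ i) := by
    have hψ : ConvexOn ℝ Set.univ (fun f : Fin N → ℝ => E y₁ (ν f)) := by
      have := (hconv y₁).comp_linearMap ν
      exact this
    set c : ℝ →ᵃ[ℝ] (Fin N → ℝ) := AffineMap.lineMap f₂ f₁ with hcdef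
    have hcc : ∀ t : ℝ, c t = t • (f₁ - f₂) + f₂ := by
      intro t
      simp [hcdef, AffineMap.lineMap_apply]
    have hcomp : ConvexOn ℝ Set.univ (fun t : ℝ => E y₁ (ν (c t))) := by
      have := hψ.comp_affineMap c
      exact this
    have hct : ∀ t : ℝ, HasDerivAt (fun t : ℝ => c t) (f₁ - f₂) t := by
      intro t
      have h := ((hasDerivAt_id t).smul_const (f₁ - f₂)).add_const f₂
      simp only [one_smul] at h
      exact h.congr_of_eventuallyEq (Filter.Eventually.of_forall fun u => (hcc u))
    have hder : ∀ t : ℝ, HasDerivAt (fun t : ℝ => E y₁ (ν (c t)))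
        (∑ i, grad y₁ (c t) i * (f₁ i - f₂ i)) t := by
      intro t
      have := (hgrad y₁ (c t)).comp_hasDerivAt t (hct t)
      simp only [ContinuousLinearMap.sum_apply, smul_eq_mul] at this
      exact this
    have hc0 : c 0 = f₂ := AffineMap.lineMap_apply_zero _ _
    have hc1 : c 1 = f₁ := AffineMap.lineMap_apply_one _ _
    have k1 := hcomp.le_slope_of_hasDerivAt (Set.mem_univ (0:ℝ)) (Set.mem_univ (1:ℝ))
      one_pos (hder 0)
    have k2 := hcomp.slope_le_of_hasDerivAt (Set.mem_univ (0:ℝ)) (Set.mem_univ (1:ℝ))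
      one_pos (hder 1)
    rw [hc0] at k1
    rw [hc1] at k2
    have hle : ∑ i, grad y₁ f₂ i * (f₁ i - f₂ i) ≤ ∑ i, grad y₁ f₁ i * (f₁ i - f₂ i) :=
      le_trans k1 k2
    have hexp : ∑ i, (grad y₁ f₁ i - grad y₁ f₂ i) * (f₁ i - f₂ i)
        = (∑ i, grad y₁ f₁ i * (f₁ i - f₂ i)) - ∑ i, grad y₁ f₂ i * (f₁ i - f₂ i) := by
      rw [← Finset.sum_sub_distrib]
      exact Finset.sum_congr rfl fun i _ => by ring
    rw [hexp]
    linarith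
  -- the ℓ^q/ℓ^p Hölder bound on the perturbation term
  have hpq1 : Real.HolderConjugate (p / (p - 1)) p := by
    rw [Real.holderConjugate_iff]; constructor
    · rw [lt_div_iff₀ hps]; linarith
    · rw [inv_div]; field_simp; ring
  have hDnn : (0:ℝ) ≤ (∑ i, |f₁ i - f₂ i| ^ p) ^ (1 / p) :=
    Real.rpow_nonneg (Finset.sum_nonneg fun i _ => Real.rpow_nonneg (abs_nonneg _) _) _
  have hHolder1 : ∑ i, |grad y₁ f₂ i - grad y₂ f₂ i| * |f₁ i - f₂ i| ≤
      (K * Y) * (∑ i, |f₁ i - f₂ i| ^ p) ^ (1 / p) := by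
    have h := Real.inner_le_Lp_mul_Lq_of_nonneg Finset.univ hpq1
      (f := fun i => |grad y₁ f₂ i - grad y₂ f₂ i|) (g := fun i => |f₁ i - f₂ i|)
      (fun i _ => abs_nonneg _) (fun i _ => abs_nonneg _)
    have hexp : (1 : ℝ) / (p / (p - 1)) = (p - 1) / p := one_div_div _ _
    rw [hexp] at h
    refine le_trans h (mul_le_mul_of_nonneg_right ?_ hDnn)
    exact hK y₁ y₂ f₂
  -- combine: lam*p*(p-1) * A ≤ K*Y*D
  have hAnn : (0:ℝ) ≤ ∑ i, (f₁ i - f₂ i) ^ 2 * (|f₁ i| + |f₂ i|) ^ (p - 2) :=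
    Finset.sum_nonneg fun i _ => mul_nonneg (sq_nonneg _) (Real.rpow_nonneg
      (by positivity) _)
  have hstep1 : lam * p * (p - 1) * (∑ i, (f₁ i - f₂ i) ^ 2 * (|f₁ i| + |f₂ i|) ^ (p - 2)) ≤
      (K * Y) * (∑ i, |f₁ i - f₂ i| ^ p) ^ (1 / p) := by
    have hA : (p - 1) * (∑ i, (f₁ i - f₂ i) ^ 2 * (|f₁ i| + |f₂ i|) ^ (p - 2)) ≤
        ∑ i, (f₁ i * |f₁ i| ^ (p - 2) - f₂ i * |f₂ i| ^ (p - 2)) * (f₁ i - f₂ i) := by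
      rw [Finset.mul_sum]
      exact Finset.sum_le_sum fun i _ => mono_pointwise hp1 hp2 (f₁ i) (f₂ i)
    have hsum_eq : (lam * p) * ∑ i, (f₁ i * |f₁ i| ^ (p - 2) - f₂ i * |f₂ i| ^ (p - 2)) *
          (f₁ i - f₂ i)
        = -∑ i, (grad y₁ f₁ i - grad y₂ f₂ i) * (f₁ i - f₂ i) := by
      rw [Finset.mul_sum, ← Finset.sum_neg_distrib]
      refine Finset.sum_congr rfl fun i _ => ?_
      have e1 := h1 i
      have e2 := h2 i
      have g1 : grad y₁ f₁ i = -(lam * (p * (f₁ i * |f₁ i| ^ (p - 2)))) := by linarith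
      have g2 : grad y₂ f₂ i = -(lam * (p * (f₂ i * |f₂ i| ^ (p - 2)))) := by linarith
      rw [g1, g2]; ring
    have hsplit : ∑ i, (grad y₁ f₁ i - grad y₂ f₂ i) * (f₁ i - f₂ i)
        = (∑ i, (grad y₁ f₁ i - grad y₁ f₂ i) * (f₁ i - f₂ i)) +
          ∑ i, (grad y₁ f₂ i - grad y₂ f₂ i) * (f₁ i - f₂ i) := by
      rw [← Finset.sum_add_distrib]
      exact Finset.sum_congr rfl fun i _ => by ring
    have habs : -∑ i, (grad y₁ f₂ i - grad y₂ f₂ i) * (f₁ i - f₂ i) ≤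
        ∑ i, |grad y₁ f₂ i - grad y₂ f₂ i| * |f₁ i - f₂ i| := by
      rw [← Finset.sum_neg_distrib]
      refine Finset.sum_le_sum fun i _ => ?_
      rw [← abs_mul]
      exact neg_le_abs _
    have hmul := mul_le_mul_of_nonneg_left hA hlp.le
    nlinarith [hmul, hsum_eq, hsplit, habs, hHolder1, hmono]
  -- Hölder with exponents 2/p and 2/(2-p)
  have hpq2 : Real.HolderConjugate (2 / p) (2 / (2 - p)) := by
    rw [Real.holderConjugate_iff]; constructor
    · rw [lt_div_iff₀ hp0]; linarith
    · rw [inv_div, inv_div]; ring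
  have hHolder2 : (∑ i, |f₁ i - f₂ i| ^ p) ≤
      (∑ i, (f₁ i - f₂ i) ^ 2 * (|f₁ i| + |f₂ i|) ^ (p - 2)) ^ (p / 2) *
        (∑ i, (|f₁ i| + |f₂ i|) ^ p) ^ ((2 - p) / 2) := by
    have hpoint : ∀ i, |f₁ i - f₂ i| ^ p =
        ((f₁ i - f₂ i) ^ 2 * (|f₁ i| + |f₂ i|) ^ (p - 2)) ^ (p / 2) *
          ((( |f₁ i| + |f₂ i|) ^ p) ^ ((2 - p) / 2)) := fun i =>
      holder_point hp1 hp2 (by positivity) (abs_sub (f₁ i) (f₂ i))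
    have h := Real.inner_le_Lp_mul_Lq_of_nonneg Finset.univ hpq2
      (f := fun i => ((f₁ i - f₂ i) ^ 2 * (|f₁ i| + |f₂ i|) ^ (p - 2)) ^ (p / 2))
      (g := fun i => ((|f₁ i| + |f₂ i|) ^ p) ^ ((2 - p) / 2))
      (fun i _ => Real.rpow_nonneg (mul_nonneg (sq_nonneg _) (Real.rpow_nonneg
        (by positivity) _)) _)
      (fun i _ => Real.rpow_nonneg (Real.rpow_nonneg (by positivity) _) _)
    have e1 : ∀ i, (((f₁ i - f₂ i) ^ 2 * (|f₁ i| + |f₂ i|) ^ (p - 2)) ^ (p / 2)) ^ (2 / p)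
        = (f₁ i - f₂ i) ^ 2 * (|f₁ i| + |f₂ i|) ^ (p - 2) := by
      intro i
      rw [← Real.rpow_mul (mul_nonneg (sq_nonneg _) (Real.rpow_nonneg (by positivity) _)),
        div_mul_div_comm, mul_comm p 2, div_self (by positivity : (2:ℝ) * p ≠ 0),
        Real.rpow_one]
    have e2 : ∀ i, ((((|f₁ i| + |f₂ i|) ^ p) ^ ((2 - p) / 2)) : ℝ) ^ (2 / (2 - p))
        = (|f₁ i| + |f₂ i|) ^ p := by
      intro i
      rw [← Real.rpow_mul (Real.rpow_nonneg (by positivity) _),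
        div_mul_div_comm, mul_comm (2 - p) 2, div_self
          (by nlinarith : (2:ℝ) * (2 - p) ≠ 0), Real.rpow_one]
    calc (∑ i, |f₁ i - f₂ i| ^ p)
        = ∑ i, ((f₁ i - f₂ i) ^ 2 * (|f₁ i| + |f₂ i|) ^ (p - 2)) ^ (p / 2) *
            (((|f₁ i| + |f₂ i|) ^ p) ^ ((2 - p) / 2)) :=
          Finset.sum_congr rfl fun i _ => hpoint i
      _ ≤ _ := by
          refine le_trans h (le_of_eq ?_)
          congr 1
          · congr 1
            · exact Finset.sum_congr rfl fun i _ => e1 i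
            · rw [one_div_div]
          · congr 1
            · exact Finset.sum_congr rfl fun i _ => e2 i
            · rw [one_div_div]
  -- Minkowski
  have hmink : (∑ i, (|f₁ i| + |f₂ i|) ^ p) ^ (1 / p) ≤ 2 * r := by
    calc (∑ i, (|f₁ i| + |f₂ i|) ^ p) ^ (1 / p)
        ≤ (∑ i, |f₁ i| ^ p) ^ (1 / p) + (∑ i, |f₂ i| ^ p) ^ (1 / p) :=
          Real.Lp_add_le_of_nonneg Finset.univ hp1.le
            (fun i _ => abs_nonneg _) (fun i _ => abs_nonneg _)
      _ ≤ r + r := add_le_add hr₁ hr₂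
      _ = 2 * r := by ring
  -- final assembly
  set D : ℝ := (∑ i, |f₁ i - f₂ i| ^ p) ^ (1 / p) with hDdef
  set C : ℝ := K * Y / (lam * p * (p - 1)) with hCdef
  have hC3 : (0:ℝ) < lam * p * (p - 1) := by positivity
  have hACD : (∑ i, (f₁ i - f₂ i) ^ 2 * (|f₁ i| + |f₂ i|) ^ (p - 2)) ≤ C * D := by
    rw [hCdef, div_mul_eq_mul_div, le_div_iff₀ hC3]
    nlinarith [hstep1]
  have hgoal_eq : (2 * r) ^ (2 - p) * K / (lam * p * (p - 1)) * Y = (2 * r) ^ (2 - p) * C := by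
    rw [hCdef]; ring
  rw [hgoal_eq]
  have hCD0 : 0 ≤ C * D := le_trans hAnn hACD
  rcases hDnn.eq_or_lt with hD0 | hD0
  · rw [← hD0]
    exact mul_nonneg (Real.rpow_nonneg (by linarith) _) (div_nonneg hKY hC3.le)
  -- D > 0 case
  have hSp : (∑ i, (|f₁ i| + |f₂ i|) ^ p) ^ ((2 - p) / 2) ≤ (2 * r) ^ (p * (2 - p) / 2) := by
    have hSnn : (0:ℝ) ≤ ∑ i, (|f₁ i| + |f₂ i|) ^ p :=
      Finset.sum_nonneg fun i _ => Real.rpow_nonneg (by positivity) _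
    have : (∑ i, (|f₁ i| + |f₂ i|) ^ p) ^ ((2 - p) / 2)
        = ((∑ i, (|f₁ i| + |f₂ i|) ^ p) ^ (1 / p)) ^ (p * (2 - p) / 2) := by
      rw [← Real.rpow_mul hSnn, show 1 / p * (p * (2 - p) / 2) = (2 - p) / 2 by
        field_simp]
    rw [this]
    exact Real.rpow_le_rpow (Real.rpow_nonneg hSnn _) hmink (by nlinarith)
  have hC0 : 0 ≤ C := (mul_nonneg_iff_of_pos_right hD0).1 hCD0
  have hT : D ^ p ≤ (C * D) ^ (p / 2) * (2 * r) ^ (p * (2 - p) / 2) := by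
    have hDp : D ^ p = ∑ i, |f₁ i - f₂ i| ^ p := by
      rw [hDdef, ← Real.rpow_mul (Finset.sum_nonneg fun i _ =>
        Real.rpow_nonneg (abs_nonneg _) _), one_div_mul_cancel hp0.ne', Real.rpow_one]
    rw [hDp]
    refine le_trans hHolder2 (mul_le_mul ?_ hSp (Real.rpow_nonneg (Finset.sum_nonneg
      fun i _ => Real.rpow_nonneg (by positivity) _) _) (Real.rpow_nonneg hCD0 _))
    exact Real.rpow_le_rpow hAnn hACD (by positivity)
  have hfinal : D ≤ C * (2 * r) ^ (2 - p) := by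
    have hsplit : D ^ p = D ^ (p / 2) * D ^ (p / 2) := by
      rw [← Real.rpow_add hD0, show p / 2 + p / 2 = p by ring]
    have hrw : (C * D) ^ (p / 2) * (2 * r) ^ (p * (2 - p) / 2) =
        (C * (2 * r) ^ (2 - p)) ^ (p / 2) * D ^ (p / 2) := by
      rw [Real.mul_rpow hC0 hD0.le, Real.mul_rpow hC0 (Real.rpow_nonneg (by linarith) _),
        ← Real.rpow_mul (by linarith : (0:ℝ) ≤ 2 * r),
        show (2 - p) * (p / 2) = p * (2 - p) / 2 by ring]
      ring
    have hkey : D ^ (p / 2) * D ^ (p / 2) ≤ (C * (2 * r) ^ (2 - p)) ^ (p / 2) * D ^ (p / 2) := by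
      rw [← hsplit, ← hrw]; exact hT
    have hDp2 : (0:ℝ) < D ^ (p / 2) := Real.rpow_pos_of_pos hD0 _
    have h' : D ^ (p / 2) ≤ (C * (2 * r) ^ (2 - p)) ^ (p / 2) :=
      le_of_mul_le_mul_right hkey hDp2
    have h'' := Real.rpow_le_rpow (Real.rpow_nonneg hD0.le _) h' (by positivity : (0:ℝ) ≤ 2 / p)
    rw [← Real.rpow_mul hD0.le, ← Real.rpow_mul (mul_nonneg hC0 (Real.rpow_nonneg
      (by linarith) _)), show p / 2 * (2 / p) = 1 by field_simp, Real.rpow_one,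
      Real.rpow_one] at h''
    exact h''
  calc D ≤ C * (2 * r) ^ (2 - p) := hfinal
    _ = (2 * r) ^ (2 - p) * C := by ring
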